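/- Let p be an odd prime, k ≥ 2, and let χ be an even primitive Dirichlet character of conductor q = p^k. Let j be an integer with k/2 ≤ j < k, and let ℓ be an integer such that χ(1 + p^j x) = e_{p^{k−j}}(ℓ x) for all integers x. Let m be an integer with gcd(m, p) = 1. Then Σ_{ψ mod p^j, ψ(−1)=1} τ(χ·ψ) · conj((χ·ψ)(m)) = q · (φ(p^j)/(2 p^j)) · Σ_{± } e_{p^k}(± m) · [ℓ ≡ ∓ m (mod p^{k−j})], where the outer sum runs over all even Dirichlet characters ψ modulo p^j, the inner sum runs over the two signs, and [·] is 1 if the congruence holds and 0 otherwise. -/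

import Mathlib

open Complex

/-- `eN q x = e^{2πix/q}`. -/
noncomputable def eN (q : ℕ) (x : ℤ) : ℂ := Complex.exp (2 * Real.pi * Complex.I * x / q)

lemma eN_add (q : ℕ) (a b : ℤ) : eN q (a + b) = eN q a * eN q b := by
  unfold eN
  rw [← Complex.exp_add]
  congr 1
  push_cast
  ring

lemma eN_nat_mul (q : ℕ) (c : ℤ) : eN q (q * c) = 1 := by
  rcases eq_or_ne q 0 with rfl | hq
  · unfold eN
    norm_num
  · unfold eN
    rw [show 2 * Real.pi * Complex.I * ((q : ℤ) * c : ℤ) / q = c * (2 * Real.pi * Complex.I) by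
      rw [div_eq_iff (show (q:ℂ) ≠ 0 from Nat.cast_ne_zero.mpr hq)]; push_cast; ring]
    exact Complex.exp_int_mul_two_pi_mul_I c

lemma eN_congr {q : ℕ} {a b : ℤ} (h : a ≡ b [ZMOD (q : ℤ)]) : eN q a = eN q b := by
  obtain ⟨t, ht⟩ := h.dvd
  have : a = b + q * (-t) := by rw [mul_neg]; linarith
  rw [this, eN_add, eN_nat_mul, mul_one]

lemma eN_mul_left (a b : ℕ) (ha : a ≠ 0) (x : ℤ) : eN (a * b) ((a : ℤ) * x) = eN b x := by
  rcases eq_or_ne b 0 with rfl | hb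
  · simp only [eN, Nat.mul_zero, Nat.cast_zero, div_zero]
  · unfold eN
    congr 1
    have ha' : (a : ℂ) ≠ 0 := Nat.cast_ne_zero.mpr ha
    have hb' : (b : ℂ) ≠ 0 := Nat.cast_ne_zero.mpr hb
    push_cast
    field_simp

lemma eN_pow (q : ℕ) (c : ℤ) (n : ℕ) : eN q c ^ n = eN q (c * n) := by
  unfold eN
  rw [← Complex.exp_nat_mul]
  congr 1
  push_cast
  ring

lemma sum_eN (n : ℕ) [NeZero n] (c : ℤ) :
    ∑ x : ZMod n, eN n (c * (x.val : ℤ)) = if (n : ℤ) ∣ c then (n : ℂ) else 0 := by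
  have hn : n ≠ 0 := NeZero.ne n
  have hval : ∑ x : ZMod n, eN n (c * (x.val : ℤ)) = ∑ i ∈ Finset.range n, eN n c ^ i := by
    refine Finset.sum_nbij' (fun x => x.val) (fun i => (i : ZMod n)) ?_ ?_ ?_ ?_ ?_
    · intro a _; exact Finset.mem_range.mpr (ZMod.val_lt a)
    · intro a _; exact Finset.mem_univ _
    · intro a _; simp [ZMod.natCast_val, ZMod.cast_id]
    · intro a ha; exact ZMod.val_cast_of_lt (Finset.mem_range.mp ha)
    · intro a _; rw [eN_pow]
  rw [hval]
  by_cases hd : (n : ℤ) ∣ c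
  · have h1 : eN n c = 1 := by
      have : c ≡ 0 [ZMOD (n : ℤ)] := (Int.modEq_zero_iff_dvd).mpr hd
      rw [eN_congr this]; simp [eN]
    simp [h1, Finset.sum_const, hd]
  · have hne : eN n c ≠ 1 := by
      intro h
      unfold eN at h
      rw [Complex.exp_eq_one_iff] at h
      obtain ⟨t, ht⟩ := h
      have h2 : (2 : ℂ) * Real.pi * Complex.I ≠ 0 := by
        simp [Real.pi_ne_zero, Complex.I_ne_zero]
      have hnC : (n : ℂ) ≠ 0 := Nat.cast_ne_zero.mpr hn
      have : (c : ℂ) = t * n := by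
        field_simp at ht
        have hc : (2:ℂ) * Real.pi * Complex.I * (c:ℂ)
            = (2:ℂ) * Real.pi * Complex.I * ((t:ℂ) * n) := by rw [ht]; ring
        exact mul_left_cancel₀ h2 hc
      have : c = t * n := by exact_mod_cast this
      exact hd ⟨t, by linarith⟩
    rw [geom_sum_eq hne, eN_pow]
    have : eN n (c * n) = 1 := by
      rw [eN_congr (show c * (n:ℤ) ≡ 0 [ZMOD (n:ℤ)] from (Int.modEq_zero_iff_dvd).mpr ⟨c, by ring⟩)]
      simp [eN]
    rw [this]
    simp [hd]
open Classical in
lemma sum_even_char (M : ℕ) [NeZero M] (a : ZMod M) :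
    ∑ ψ : DirichletCharacter ℂ M, (if ψ.Even then ψ a else 0)
      = (M.totient : ℂ) / 2 *
        ((if a = 1 then 1 else 0) + (if a = -1 then 1 else 0)) := by
  haveI : NeZero (Monoid.exponent (ZMod M)ˣ) := ⟨Monoid.exponent_ne_zero_of_finite⟩
  have key : ∀ ψ : DirichletCharacter ℂ M,
      (if ψ.Even then ψ a else 0) = (ψ a + ψ (-a)) / 2 := by
    intro ψ
    by_cases h : ψ.Even
    · have h' : ψ (-1) = 1 := h
      rw [if_pos h, show (-a : ZMod M) = -1 * a by ring, map_mul, h', one_mul]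
      ring
    · rw [if_neg h]
      have h2 : ψ (-1) * ψ (-1) = 1 := by
        rw [← map_mul]; norm_num
      have hodd : ψ (-1) = -1 := by
        rcases mul_self_eq_one_iff.mp h2 with h1 | h1
        · exact absurd h1 h
        · exact h1
      have : ψ (-a) = - ψ a := by
        rw [show (-a : ZMod M) = -1 * a by ring, map_mul, hodd]; ring
      rw [this]; ring
  rw [Finset.sum_congr rfl (fun ψ _ => key ψ), ← Finset.sum_div, Finset.sum_add_distrib,
    DirichletCharacter.sum_characters_eq, DirichletCharacter.sum_characters_eq]
  have hneg : ((-a : ZMod M) = 1) ↔ (a = -1) := neg_eq_iff_eq_neg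
  rw [if_congr hneg rfl rfl]
  split_ifs <;> ring
lemma sum_coset_one (M R N : ℕ) (hM : 2 ≤ M) (hR : R ≠ 0) (hN : N = M * R) [NeZero N] [NeZero R]
    (hd : M ∣ N) (g : ZMod N → ℂ) :
    ∑ s : ZMod N, (if (ZMod.castHom hd (ZMod M) s = 1) then g s else 0)
      = ∑ x : ZMod R, g ((1 + M * x.val : ℕ) : ZMod N) := by
  haveI : NeZero M := ⟨by omega⟩
  rw [← Finset.sum_filter]
  have hMpos : 0 < M := by omega
  refine (Finset.sum_nbij' (fun x : ZMod R => ((1 + M * x.val : ℕ) : ZMod N))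
      (fun s : ZMod N => ((s.val / M : ℕ) : ZMod R)) ?_ ?_ ?_ ?_ ?_).symm
  · -- maps into filter
    intro x _
    simp only [Finset.mem_filter, Finset.mem_univ, true_and]
    rw [map_natCast]
    push_cast
    simp [ZMod.natCast_self]
  · intro s _; exact Finset.mem_univ _
  · -- left inverse on ZMod R
    intro x _
    have hlt : 1 + M * x.val < N := by
      have := ZMod.val_lt x
      nlinarith
    rw [ZMod.val_natCast_of_lt hlt]
    have : (1 + M * x.val) / M = x.val := by
      rw [Nat.add_mul_div_left _ _ hMpos, Nat.div_eq_of_lt (by omega)]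
      omega
    rw [this, ZMod.natCast_val, ZMod.cast_id]
  · -- right inverse on filter
    intro s hs
    simp only [Finset.mem_filter, Finset.mem_univ, true_and] at hs
    have hmod : s.val % M = 1 := by
      rw [ZMod.castHom_apply, ← ZMod.natCast_val, ZMod.natCast_eq_iff] at hs
      obtain ⟨t, ht⟩ := hs
      rw [ZMod.val_one_eq_one_mod, Nat.mod_eq_of_lt (by omega : 1 < M)] at ht
      rw [ht, Nat.add_mul_mod_self_left]
      exact Nat.mod_eq_of_lt (by omega)
    have hvlt : s.val < N := ZMod.val_lt s
    have hdiv : s.val / M < R := by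
      apply Nat.div_lt_of_lt_mul
      omega
    rw [ZMod.val_natCast_of_lt hdiv]
    have : 1 + M * (s.val / M) = s.val := by
      have := Nat.mod_add_div s.val M
      omega
    rw [this, ZMod.natCast_val, ZMod.cast_id]
  · intro x _; rfl

lemma sum_coset_neg (M R N : ℕ) (hM : 2 ≤ M) (hR : R ≠ 0) (hN : N = M * R) [NeZero N] [NeZero R]
    (hd : M ∣ N) (g : ZMod N → ℂ) :
    ∑ s : ZMod N, (if (ZMod.castHom hd (ZMod M) s = -1) then g s else 0)
      = ∑ x : ZMod R, g (-((1 + M * x.val : ℕ) : ZMod N)) := by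
  have step : ∑ s : ZMod N, (if (ZMod.castHom hd (ZMod M) s = -1) then g s else 0)
      = ∑ s : ZMod N, (if (ZMod.castHom hd (ZMod M) s = 1) then g (-s) else 0) := by
    refine Fintype.sum_equiv (Equiv.neg (ZMod N))
      (fun s => if (ZMod.castHom hd (ZMod M) s = -1) then g s else 0)
      (fun s => if (ZMod.castHom hd (ZMod M) s = 1) then g (-s) else 0) (fun s => ?_)
    simp only [Equiv.neg_apply, map_neg, neg_neg]
    refine if_congr ?_ rfl rfl
    constructor
    · intro h; rw [h, neg_neg]
    · intro h; rw [← neg_neg (ZMod.castHom hd (ZMod M) s), h]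
  rw [step, sum_coset_one M R N hM hR hN hd]
open Classical in
/-- Average of Gauss sums times character values along an even coset, linear range
(Lemma 2.7). -/
theorem gauss_sum_average_coset_linear (p j k : ℕ) (hp : p.Prime) (hodd : Odd p)
    (hk : 2 ≤ k) (hkj : k ≤ 2 * j) (hjk : j < k)
    (χ : DirichletCharacter ℂ (p ^ k)) (hχ : χ.IsPrimitive) (hχeven : χ.Even)
    (ℓ m : ℤ) (hm : Int.gcd m p = 1)
    (hpost : ∀ x : ℤ, χ ((1 + p ^ j * x : ℤ) : ZMod (p ^ k)) = eN (p ^ (k - j)) (ℓ * x)) :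
    haveI : NeZero (p ^ k) := ⟨pow_ne_zero _ hp.ne_zero⟩
    (∑ ψ : DirichletCharacter ℂ (p ^ j),
        if ψ.Even then
          (∑ t : ZMod (p ^ k),
            (χ * DirichletCharacter.changeLevel (pow_dvd_pow p hjk.le) ψ) t *
              eN (p ^ k) (t.val : ℤ)) *
          (starRingEnd ℂ)
            ((χ * DirichletCharacter.changeLevel (pow_dvd_pow p hjk.le) ψ)
              ((m : ℤ) : ZMod (p ^ k)))
        else 0)
      = (p ^ k : ℂ) * ((p ^ j).totient : ℂ) / (2 * (p ^ j : ℂ)) *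
          ((eN (p ^ k) m * if ℓ ≡ -m [ZMOD (p ^ (k - j) : ℕ)] then 1 else 0) +
           (eN (p ^ k) (-m) * if ℓ ≡ m [ZMOD (p ^ (k - j) : ℕ)] then 1 else 0)) := by
  haveI : NeZero (p ^ k) := ⟨pow_ne_zero _ hp.ne_zero⟩
  haveI : NeZero (p ^ j) := ⟨pow_ne_zero _ hp.ne_zero⟩
  haveI : NeZero (p ^ (k - j)) := ⟨pow_ne_zero _ hp.ne_zero⟩
  have hp3 : 3 ≤ p := by
    have h2 := hp.two_le
    rcases hodd with ⟨t, ht⟩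
    omega
  have hj1 : 1 ≤ j := by omega
  have hM2 : 2 ≤ p ^ j :=
    le_trans (by omega) (Nat.le_self_pow (by omega) p)
  have hR0 : p ^ (k - j) ≠ 0 := pow_ne_zero _ hp.ne_zero
  have hNMR : p ^ k = p ^ j * p ^ (k - j) := by
    rw [← pow_add]
    congr 1
    omega
  set m' : ZMod (p ^ k) := ((m : ℤ) : ZMod (p ^ k)) with hm'def
  have hcop : Nat.Coprime m.natAbs p := by
    simpa [Int.gcd] using hm
  have hu : IsUnit m' := by
    have h1 : IsUnit ((m.natAbs : ℕ) : ZMod (p ^ k)) :=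
      (ZMod.isUnit_iff_coprime _ _).mpr (hcop.pow_right k)
    rcases Int.natAbs_eq m with he | he
    · rw [hm'def, he, Int.cast_natCast]; exact h1
    · rw [hm'def, he, Int.cast_neg, Int.cast_natCast]; exact h1.neg
  set h := pow_dvd_pow p hjk.le with hdef
  -- step 0: unit times conj equals one
  have hconj : ∀ lam : DirichletCharacter ℂ (p ^ k),
      lam m' * (starRingEnd ℂ) (lam m') = 1 := by
    intro lam
    set u := hu.unit with hudef
    have hn0 : orderOf u ≠ 0 := (orderOf_pos u).ne'
    have hpow : m' ^ (orderOf u) = 1 := by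
      calc m' ^ orderOf u = ((u : ZMod (p ^ k))) ^ orderOf u := by rw [hu.unit_spec]
        _ = ((u ^ orderOf u : (ZMod (p ^ k))ˣ) : ZMod (p ^ k)) := by
            rw [Units.val_pow_eq_pow_val]
        _ = 1 := by rw [pow_orderOf_eq_one u]; rfl
    have hz : (lam m') ^ (orderOf u) = 1 := by rw [← map_pow, hpow, map_one]
    have hnorm : ‖lam m'‖ = 1 := Complex.norm_eq_one_of_pow_eq_one hz hn0
    rw [Complex.mul_conj, Complex.normSq_eq_norm_sq, hnorm]
    norm_num
  -- step 1: per character reindex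
  have step1 : ∀ ψ : DirichletCharacter ℂ (p ^ j),
      (∑ t : ZMod (p ^ k),
          (χ * DirichletCharacter.changeLevel h ψ) t * eN (p ^ k) (t.val : ℤ)) *
        (starRingEnd ℂ) ((χ * DirichletCharacter.changeLevel h ψ) m')
      = ∑ s : ZMod (p ^ k),
          (χ * DirichletCharacter.changeLevel h ψ) s * eN (p ^ k) (((m' * s : ZMod (p ^ k)).val : ℕ) : ℤ) := by
    intro ψ
    set lam := χ * DirichletCharacter.changeLevel h ψ with hlam
    have hcanc : ∀ y : ZMod (p ^ k),
        ((hu.unit⁻¹ : (ZMod (p ^ k))ˣ) : ZMod (p ^ k)) * (m' * y) = y := by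
      intro y
      have hy := Units.inv_mul_cancel_left hu.unit y
      rw [hu.unit_spec] at hy
      exact hy
    have hcanc2 : ∀ y : ZMod (p ^ k),
        m' * (((hu.unit⁻¹ : (ZMod (p ^ k))ˣ) : ZMod (p ^ k)) * y) = y := by
      intro y
      have hy := Units.mul_inv_cancel_left hu.unit y
      rw [hu.unit_spec] at hy
      exact hy
    have hbij : Function.Bijective (fun s : ZMod (p ^ k) => m' * s) := by
      constructor
      · intro a b hab
        rw [← hcanc a, ← hcanc b]
        simp only at hab
        rw [hab]
      · intro y
        exact ⟨((hu.unit⁻¹ : (ZMod (p ^ k))ˣ) : ZMod (p ^ k)) * y, hcanc2 y⟩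
    have hre : ∑ s : ZMod (p ^ k), lam (m' * s) * eN (p ^ k) (((m' * s : ZMod (p ^ k)).val : ℕ) : ℤ)
        = ∑ t : ZMod (p ^ k), lam t * eN (p ^ k) ((t.val : ℕ) : ℤ) :=
      Fintype.sum_bijective _ hbij _ _ (fun x => rfl)
    rw [← hre, Finset.sum_mul]
    refine Finset.sum_congr rfl (fun s _ => ?_)
    rw [map_mul]
    linear_combination (lam s * eN (p ^ k) (((m' * s : ZMod (p ^ k)).val : ℕ) : ℤ)) * hconj lam
  -- factoring product character
  have factor : ∀ (ψ : DirichletCharacter ℂ (p ^ j)) (s : ZMod (p ^ k)),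
      (χ * DirichletCharacter.changeLevel h ψ) s
        = χ s * ψ (ZMod.castHom h (ZMod (p ^ j)) s) := by
    intro ψ s
    rw [MulChar.mul_apply]
    by_cases hs : IsUnit s
    · congr 1
      have hc := DirichletCharacter.changeLevel_eq_cast_of_dvd ψ h hs.unit
      rw [hs.unit_spec] at hc
      rw [hc, ZMod.castHom_apply]
    · rw [MulChar.map_nonunit χ hs, zero_mul, zero_mul]
  -- step 2: swap sums and use orthogonality
  have step2 :
      (∑ ψ : DirichletCharacter ℂ (p ^ j),
        if ψ.Even then
          (∑ t : ZMod (p ^ k),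
            (χ * DirichletCharacter.changeLevel h ψ) t * eN (p ^ k) (t.val : ℤ)) *
          (starRingEnd ℂ) ((χ * DirichletCharacter.changeLevel h ψ) m')
        else 0)
      = ((p ^ j).totient : ℂ) / 2 *
          ((∑ s : ZMod (p ^ k), if (ZMod.castHom h (ZMod (p ^ j)) s = 1) then
              χ s * eN (p ^ k) (((m' * s : ZMod (p ^ k)).val : ℕ) : ℤ) else 0) +
           (∑ s : ZMod (p ^ k), if (ZMod.castHom h (ZMod (p ^ j)) s = -1) then
              χ s * eN (p ^ k) (((m' * s : ZMod (p ^ k)).val : ℕ) : ℤ) else 0)) := by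
    calc (∑ ψ : DirichletCharacter ℂ (p ^ j),
        if ψ.Even then
          (∑ t : ZMod (p ^ k),
            (χ * DirichletCharacter.changeLevel h ψ) t * eN (p ^ k) (t.val : ℤ)) *
          (starRingEnd ℂ) ((χ * DirichletCharacter.changeLevel h ψ) m')
        else 0)
        = ∑ ψ : DirichletCharacter ℂ (p ^ j),
            if ψ.Even then (∑ s : ZMod (p ^ k),
              (χ * DirichletCharacter.changeLevel h ψ) s *
                eN (p ^ k) (((m' * s : ZMod (p ^ k)).val : ℕ) : ℤ)) else 0 := by
          refine Finset.sum_congr rfl (fun ψ _ => ?_)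
          split_ifs with hψ
          · rw [step1 ψ]
          · rfl
      _ = ∑ ψ : DirichletCharacter ℂ (p ^ j), ∑ s : ZMod (p ^ k),
            (if ψ.Even then (χ * DirichletCharacter.changeLevel h ψ) s *
              eN (p ^ k) (((m' * s : ZMod (p ^ k)).val : ℕ) : ℤ) else 0) := by
          refine Finset.sum_congr rfl (fun ψ _ => ?_)
          split_ifs with hψ
          · rfl
          · exact Finset.sum_const_zero.symm
      _ = ∑ s : ZMod (p ^ k), ∑ ψ : DirichletCharacter ℂ (p ^ j),
            (if ψ.Even then (χ * DirichletCharacter.changeLevel h ψ) s *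
              eN (p ^ k) (((m' * s : ZMod (p ^ k)).val : ℕ) : ℤ) else 0) := Finset.sum_comm
      _ = ∑ s : ZMod (p ^ k),
            (∑ ψ : DirichletCharacter ℂ (p ^ j),
              (if ψ.Even then ψ (ZMod.castHom h (ZMod (p ^ j)) s) else 0)) *
            (χ s * eN (p ^ k) (((m' * s : ZMod (p ^ k)).val : ℕ) : ℤ)) := by
          refine Finset.sum_congr rfl (fun s _ => ?_)
          rw [Finset.sum_mul]
          refine Finset.sum_congr rfl (fun ψ _ => ?_)
          rw [factor ψ s]
          split_ifs
          · ring
          · rw [zero_mul]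
      _ = ∑ s : ZMod (p ^ k),
            ((p ^ j).totient : ℂ) / 2 *
              ((if (ZMod.castHom h (ZMod (p ^ j)) s = 1) then 1 else 0) +
               (if (ZMod.castHom h (ZMod (p ^ j)) s = -1) then 1 else 0)) *
            (χ s * eN (p ^ k) (((m' * s : ZMod (p ^ k)).val : ℕ) : ℤ)) := by
          refine Finset.sum_congr rfl (fun s _ => ?_)
          rw [sum_even_char]
      _ = ((p ^ j).totient : ℂ) / 2 *
          ((∑ s : ZMod (p ^ k), if (ZMod.castHom h (ZMod (p ^ j)) s = 1) then
              χ s * eN (p ^ k) (((m' * s : ZMod (p ^ k)).val : ℕ) : ℤ) else 0) +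
           (∑ s : ZMod (p ^ k), if (ZMod.castHom h (ZMod (p ^ j)) s = -1) then
              χ s * eN (p ^ k) (((m' * s : ZMod (p ^ k)).val : ℕ) : ℤ) else 0)) := by
          rw [← Finset.sum_add_distrib, Finset.mul_sum]
          refine Finset.sum_congr rfl (fun s _ => ?_)
          split_ifs <;> ring
  -- coset evaluations
  have evalplus :
      (∑ s : ZMod (p ^ k), if (ZMod.castHom h (ZMod (p ^ j)) s = 1) then
          χ s * eN (p ^ k) (((m' * s : ZMod (p ^ k)).val : ℕ) : ℤ) else 0)
      = eN (p ^ k) m * (if ((p ^ (k - j) : ℕ) : ℤ) ∣ ℓ + m then ((p ^ (k - j) : ℕ) : ℂ) else 0) := by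
    have eNfac : ∀ y : ℤ, eN (p ^ k) (((p ^ j : ℕ) : ℤ) * y) = eN (p ^ (k - j)) y := by
      intro y
      rw [hNMR]
      exact eN_mul_left _ _ (pow_ne_zero _ hp.ne_zero) y
    have hc := sum_coset_one (p ^ j) (p ^ (k - j)) (p ^ k) hM2 hR0 hNMR h
        (fun s => χ s * eN (p ^ k) (((m' * s : ZMod (p ^ k)).val : ℕ) : ℤ))
    rw [hc]
    have key : ∀ x : ZMod (p ^ (k - j)),
        χ (((1 + p ^ j * x.val : ℕ) : ZMod (p ^ k))) *
          eN (p ^ k) ((((m' * ((1 + p ^ j * x.val : ℕ) : ZMod (p ^ k)) : ZMod (p ^ k)).val : ℕ)) : ℤ)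
        = eN (p ^ k) m * eN (p ^ (k - j)) ((ℓ + m) * (x.val : ℤ)) := by
      intro x
      have hχx : χ (((1 + p ^ j * x.val : ℕ) : ZMod (p ^ k)))
          = eN (p ^ (k - j)) (ℓ * (x.val : ℤ)) := by
        rw [show (((1 + p ^ j * x.val : ℕ) : ZMod (p ^ k)))
            = (((1 + (p : ℤ) ^ j * (x.val : ℤ) : ℤ)) : ZMod (p ^ k)) by push_cast; ring]
        exact hpost _
      have hE : eN (p ^ k) ((((m' * ((1 + p ^ j * x.val : ℕ) : ZMod (p ^ k)) : ZMod (p ^ k)).val : ℕ)) : ℤ)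
          = eN (p ^ k) (m + ((p ^ j : ℕ) : ℤ) * (m * (x.val : ℤ))) := by
        apply eN_congr
        rw [← ZMod.intCast_eq_intCast_iff]
        push_cast [ZMod.natCast_val, ZMod.cast_id, ZMod.intCast_cast]
        rw [hm'def]
        ring
      rw [hχx, hE, eN_add, eNfac]
      rw [show (ℓ + m) * (x.val : ℤ) = ℓ * (x.val : ℤ) + m * (x.val : ℤ) by ring, eN_add]
      ring
    rw [Finset.sum_congr rfl (fun x _ => key x), ← Finset.mul_sum, sum_eN]
  have evalminus :
      (∑ s : ZMod (p ^ k), if (ZMod.castHom h (ZMod (p ^ j)) s = -1) then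
          χ s * eN (p ^ k) (((m' * s : ZMod (p ^ k)).val : ℕ) : ℤ) else 0)
      = eN (p ^ k) (-m) * (if ((p ^ (k - j) : ℕ) : ℤ) ∣ ℓ - m then ((p ^ (k - j) : ℕ) : ℂ) else 0) := by
    have eNfac : ∀ y : ℤ, eN (p ^ k) (((p ^ j : ℕ) : ℤ) * y) = eN (p ^ (k - j)) y := by
      intro y
      rw [hNMR]
      exact eN_mul_left _ _ (pow_ne_zero _ hp.ne_zero) y
    have hc := sum_coset_neg (p ^ j) (p ^ (k - j)) (p ^ k) hM2 hR0 hNMR h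
        (fun s => χ s * eN (p ^ k) (((m' * s : ZMod (p ^ k)).val : ℕ) : ℤ))
    rw [hc]
    have key : ∀ x : ZMod (p ^ (k - j)),
        χ (-((1 + p ^ j * x.val : ℕ) : ZMod (p ^ k))) *
          eN (p ^ k) ((((m' * (-((1 + p ^ j * x.val : ℕ) : ZMod (p ^ k))) : ZMod (p ^ k)).val : ℕ)) : ℤ)
        = eN (p ^ k) (-m) * eN (p ^ (k - j)) ((ℓ - m) * (x.val : ℤ)) := by
      intro x
      have hχneg : χ (-((1 + p ^ j * x.val : ℕ) : ZMod (p ^ k)))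
          = χ (((1 + p ^ j * x.val : ℕ) : ZMod (p ^ k))) := by
        rw [show -((1 + p ^ j * x.val : ℕ) : ZMod (p ^ k))
            = -1 * (((1 + p ^ j * x.val : ℕ) : ZMod (p ^ k))) by ring, map_mul]
        have h1 : χ (-1) = 1 := hχeven
        rw [h1, one_mul]
      have hχx : χ (((1 + p ^ j * x.val : ℕ) : ZMod (p ^ k)))
          = eN (p ^ (k - j)) (ℓ * (x.val : ℤ)) := by
        rw [show (((1 + p ^ j * x.val : ℕ) : ZMod (p ^ k)))
            = (((1 + (p : ℤ) ^ j * (x.val : ℤ) : ℤ)) : ZMod (p ^ k)) by push_cast; ring]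
        exact hpost _
      have hE : eN (p ^ k) ((((m' * (-((1 + p ^ j * x.val : ℕ) : ZMod (p ^ k))) : ZMod (p ^ k)).val : ℕ)) : ℤ)
          = eN (p ^ k) (-m + ((p ^ j : ℕ) : ℤ) * (-(m * (x.val : ℤ)))) := by
        apply eN_congr
        rw [← ZMod.intCast_eq_intCast_iff]
        push_cast [ZMod.natCast_val, ZMod.cast_id, ZMod.intCast_cast]
        rw [hm'def]
        ring
      rw [hχneg, hχx, hE, eN_add, eNfac]
      rw [show (ℓ - m) * (x.val : ℤ) = ℓ * (x.val : ℤ) + -(m * (x.val : ℤ)) by ring, eN_add]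
      ring
    rw [Finset.sum_congr rfl (fun x _ => key x), ← Finset.mul_sum, sum_eN]
  -- final assembly
  rw [step2, evalplus, evalminus]
  have hiff1 : (((p ^ (k - j) : ℕ) : ℤ) ∣ ℓ + m) ↔ ℓ ≡ -m [ZMOD (p ^ (k - j) : ℕ)] := by
    rw [Int.modEq_iff_dvd, show -m - ℓ = -(ℓ + m) by ring, dvd_neg]
  have hiff2 : (((p ^ (k - j) : ℕ) : ℤ) ∣ ℓ - m) ↔ ℓ ≡ m [ZMOD (p ^ (k - j) : ℕ)] := by
    rw [Int.modEq_iff_dvd, show (m : ℤ) - ℓ = -(ℓ - m) by ring, dvd_neg]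
  rw [if_congr hiff1 rfl rfl, if_congr hiff2 rfl rfl]
  have hsplit1 : (if ℓ ≡ -m [ZMOD (p ^ (k - j) : ℕ)] then ((p ^ (k - j) : ℕ) : ℂ) else 0)
      = ((p ^ (k - j) : ℕ) : ℂ) * (if ℓ ≡ -m [ZMOD (p ^ (k - j) : ℕ)] then 1 else 0) := by
    split_ifs <;> ring
  have hsplit2 : (if ℓ ≡ m [ZMOD (p ^ (k - j) : ℕ)] then ((p ^ (k - j) : ℕ) : ℂ) else 0)
      = ((p ^ (k - j) : ℕ) : ℂ) * (if ℓ ≡ m [ZMOD (p ^ (k - j) : ℕ)] then 1 else 0) := by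
    split_ifs <;> ring
  rw [hsplit1, hsplit2]
  have hMne : ((p : ℂ) ^ j) ≠ 0 := pow_ne_zero _ (Nat.cast_ne_zero.mpr hp.ne_zero)
  have hNC : ((p : ℂ) ^ k) = (p : ℂ) ^ j * ((p ^ (k - j) : ℕ) : ℂ) := by
    push_cast
    rw [← pow_add]
    congr 1
    omega
  rw [hNC]
  field_simp
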